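/- arXiv:0911.3210 — 2 statements merged into one kernel-verified Lean document; each statement's English description precedes it below -/
import Mathlib

section
/- Let a, b > 0 be real numbers, let g, h ∈ SU(1,1), and set A = g·diag(a,−a)·g⁻¹ and B = h·diag(b,−b)·h⁻¹. Then A + B has real eigenvalues of the form c and −c for some real c, and this c necessarily satisfies the reversed triangle inequality c ≥ a + b. -/
open Matrix Polynomial

noncomputable section

/-- The signature matrix `J = diag(1,…,1,−1,…,−1)` with `p` ones and `q` minus ones. -/
def Jmat (p q : ℕ) : Matrix (Fin (p + q)) (Fin (p + q)) ℂ :=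
  Matrix.diagonal fun i => if (i : ℕ) < p then 1 else -1

/-- The group `SU(p,q)` of complex `(p+q)×(p+q)` matrices `g` with `det g = 1` and
`gᴴ J g = J`. -/
def SUpq (p q : ℕ) : Set (Matrix (Fin (p + q)) (Fin (p + q)) ℂ) :=
  { g | g.det = 1 ∧ g.conjTranspose * Jmat p q * g = Jmat p q }

/-- `x` is the ordered spectrum of `M`: the entries of `x` are non-increasing within the
first `p` coordinates and within the last `q` coordinates, every entry of the first block
is strictly greater than every entry of the second block, and the eigenvalues of `M`
counted with multiplicity are exactly the entries of `x` (its characteristic polynomial is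
`∏ i (X - x i)`). -/
def IsOrderedSpectrum (p q : ℕ) (M : Matrix (Fin (p + q)) (Fin (p + q)) ℂ)
    (x : Fin (p + q) → ℝ) : Prop :=
  (∀ i j : Fin (p + q), i ≤ j → ((j : ℕ) < p ∨ p ≤ (i : ℕ)) → x j ≤ x i) ∧
  (∀ i j : Fin (p + q), (i : ℕ) < p → p ≤ (j : ℕ) → x j < x i) ∧
  M.charpoly = ∏ i, (X - Polynomial.C ((x i : ℂ)))



lemma my_charpoly_fin_two (M : Matrix (Fin 2) (Fin 2) ℂ) :
    M.charpoly = X ^ 2 - C M.trace * X + C M.det := by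
  rw [Matrix.charpoly, Matrix.det_fin_two, Matrix.trace_fin_two, Matrix.det_fin_two]
  simp [Matrix.charmatrix_apply_eq, Matrix.charmatrix_apply_ne]
  ring

lemma JJ : Jmat 1 1 * Jmat 1 1 = 1 := by
  ext i j
  fin_cases i <;> fin_cases j <;>
    simp [Jmat, Matrix.mul_apply, Fin.sum_univ_succ, Matrix.diagonal, Matrix.one_apply]

lemma Jcancel (X : Matrix (Fin (1+1)) (Fin (1+1)) ℂ) :
    Jmat 1 1 * (Jmat 1 1 * X) = X := by
  rw [← mul_assoc, JJ, one_mul]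

lemma JH : (Jmat 1 1).conjTranspose = Jmat 1 1 := by
  ext i j
  fin_cases i <;> fin_cases j <;>
    simp [Jmat, Matrix.conjTranspose_apply, Matrix.diagonal]

lemma su_inv {g : Matrix (Fin (1+1)) (Fin (1+1)) ℂ} (hg : g ∈ SUpq 1 1) :
    g⁻¹ = Jmat 1 1 * g.conjTranspose * Jmat 1 1 := by
  apply Matrix.inv_eq_left_inv
  calc Jmat 1 1 * g.conjTranspose * Jmat 1 1 * g
      = Jmat 1 1 * (g.conjTranspose * Jmat 1 1 * g) := by noncomm_ring
    _ = Jmat 1 1 * Jmat 1 1 := by rw [hg.2]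
    _ = 1 := JJ

lemma su_other {g : Matrix (Fin (1+1)) (Fin (1+1)) ℂ} (hg : g ∈ SUpq 1 1) :
    g * Jmat 1 1 * g.conjTranspose = Jmat 1 1 := by
  have hgu : IsUnit g.det := by rw [hg.1]; exact isUnit_one
  have h1 : g * (Jmat 1 1 * g.conjTranspose * Jmat 1 1) = 1 := by
    rw [← su_inv hg]; exact Matrix.mul_nonsing_inv g hgu
  calc g * Jmat 1 1 * g.conjTranspose
      = g * (Jmat 1 1 * g.conjTranspose * Jmat 1 1) * Jmat 1 1 := by
        rw [mul_assoc, mul_assoc, mul_assoc, JJ, mul_one]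
    _ = Jmat 1 1 := by rw [h1, one_mul]

lemma su_mem_inv_mul {g h : Matrix (Fin (1+1)) (Fin (1+1)) ℂ}
    (hg : g ∈ SUpq 1 1) (hh : h ∈ SUpq 1 1) : g⁻¹ * h ∈ SUpq 1 1 := by
  constructor
  · rw [Matrix.det_mul, Matrix.det_nonsing_inv, hg.1, hh.1]; simp
  · have hginvH : (g⁻¹).conjTranspose = Jmat 1 1 * g * Jmat 1 1 := by
      rw [su_inv hg, Matrix.conjTranspose_mul, Matrix.conjTranspose_mul, JH,
        Matrix.conjTranspose_conjTranspose]
      noncomm_ring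
    have h2r : ∀ X, g * (Jmat 1 1 * (g.conjTranspose * X)) = Jmat 1 1 * X := fun X => by
      rw [← mul_assoc, ← mul_assoc, su_other hg]
    rw [Matrix.conjTranspose_mul, hginvH, su_inv hg]
    simp only [Matrix.mul_assoc, Jcancel]
    rw [h2r, Jcancel, ← mul_assoc]; exact hh.2

lemma trace11 (M : Matrix (Fin (1+1)) (Fin (1+1)) ℂ) : M.trace = M 0 0 + M 1 1 :=
  Matrix.trace_fin_two M

lemma det11 (M : Matrix (Fin (1+1)) (Fin (1+1)) ℂ) :
    M.det = M 0 0 * M 1 1 - M 0 1 * M 1 0 := Matrix.det_fin_two M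

lemma charpoly11 (M : Matrix (Fin (1+1)) (Fin (1+1)) ℂ) :
    M.charpoly = X ^ 2 - C M.trace * X + C M.det := my_charpoly_fin_two M

lemma su_entries {w : Matrix (Fin (1+1)) (Fin (1+1)) ℂ} (hw : w ∈ SUpq 1 1) :
    w 1 1 = starRingEnd ℂ (w 0 0) ∧ w 1 0 = starRingEnd ℂ (w 0 1) ∧
      w 0 0 * starRingEnd ℂ (w 0 0) - w 0 1 * starRingEnd ℂ (w 0 1) = 1 := by
  have hwu : IsUnit w.det := by rw [hw.1]; exact isUnit_one
  have hadj : w.adjugate = Jmat 1 1 * w.conjTranspose * Jmat 1 1 := by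
    rw [← su_inv hw, Matrix.inv_def, hw.1]
    simp
  have e00 := congrFun (congrFun hadj 0) 0
  have e01 := congrFun (congrFun hadj 0) 1
  have enorm := congrFun (congrFun hw.2 0) 0
  simp [Matrix.adjugate_fin_two, Jmat, Matrix.mul_apply, Fin.sum_univ_succ,
    Matrix.conjTranspose_apply] at e00 e01 enorm
  refine ⟨e00, ?_, ?_⟩
  · have := congrArg (starRingEnd ℂ) e01
    simpa using this.symm
  · rw [← enorm]
    have : w 1 0 = starRingEnd ℂ (w 0 1) := by
      have := congrArg (starRingEnd ℂ) e01
      simpa using this.symm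
    rw [this, Complex.conj_conj]
    ring

/-- if `a, b > 0`, `g, h ∈ SU(1,1)`, `A = g·diag(a,−a)·g⁻¹` and
`B = h·diag(b,−b)·h⁻¹`, then `A + B` has real eigenvalues `c, −c` with `c ≥ a + b`. -/
theorem sum_SU11_orbits_reversed_triangle (a b : ℝ) (ha : 0 < a) (hb : 0 < b)
    (g h A B : Matrix (Fin (1 + 1)) (Fin (1 + 1)) ℂ)
    (hg : g ∈ SUpq 1 1) (hh : h ∈ SUpq 1 1)
    (hA : A = g * Matrix.diagonal ![(a : ℂ), (-a : ℝ)] * g⁻¹)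
    (hB : B = h * Matrix.diagonal ![(b : ℂ), (-b : ℝ)] * h⁻¹) :
    ∃ c : ℝ, a + b ≤ c ∧
      (A + B).charpoly =
        (X - Polynomial.C ((c : ℂ))) * (X - Polynomial.C ((-c : ℝ) : ℂ)) := by
  have hgu : IsUnit g.det := by rw [hg.1]; exact isUnit_one
  set w := g⁻¹ * h with hw
  have hwmem : w ∈ SUpq 1 1 := su_mem_inv_mul hg hh
  obtain ⟨h11, h10, hnorm⟩ := su_entries hwmem
  set α := w 0 0 with hα
  set β := w 0 1 with hβ
  set t := Complex.normSq β with ht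
  have hbt : β * starRingEnd ℂ β = (t : ℂ) := Complex.mul_conj β
  have hwinv : w⁻¹ = !![starRingEnd ℂ α, -β; -(starRingEnd ℂ β), α] := by
    rw [su_inv hwmem]
    ext i j
    fin_cases i <;> fin_cases j <;>
      simp [Jmat, Matrix.mul_apply, Fin.sum_univ_succ, Matrix.conjTranspose_apply,
        h10, h11] <;> rfl
  set M := Matrix.diagonal ![(a : ℂ), (-a : ℝ)] +
      w * Matrix.diagonal ![(b : ℂ), (-b : ℝ)] * w⁻¹ with hM
  have hAB : A + B = g * M * g⁻¹ := by
    have hgw : g * w = h := by rw [hw, ← mul_assoc, Matrix.mul_nonsing_inv g hgu, one_mul]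
    have hhi : h⁻¹ = w⁻¹ * g⁻¹ := by rw [← hgw, Matrix.mul_inv_rev]
    rw [hA, hB, hhi, ← hgw, hM]
    noncomm_ring
  have htr : M.trace = 0 := by
    rw [trace11, hM]
    simp [Matrix.add_apply, Matrix.mul_apply, Fin.sum_univ_succ, hwinv, h10, h11]
    ring
  have hdet : M.det = -(((a + b) ^ 2 + 4 * a * b * t : ℝ) : ℂ) := by
    rw [det11, hM]
    simp [Matrix.add_apply, Matrix.mul_apply, Fin.sum_univ_succ, hwinv, h10, h11]
    linear_combination (-(b:ℂ)^2 * (α * starRingEnd ℂ α) + b^2 * (β * starRingEnd ℂ β)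
      - 2*a*b - b^2) * hnorm + (-4*(a:ℂ)*b) * hbt
  have htAB : (A + B).trace = 0 := by
    rw [hAB, mul_assoc, Matrix.trace_mul_comm, mul_assoc, Matrix.nonsing_inv_mul g hgu,
      mul_one, htr]
  have hdAB : (A + B).det = -(((a + b) ^ 2 + 4 * a * b * t : ℝ) : ℂ) := by
    rw [hAB, Matrix.det_mul, Matrix.det_mul, Matrix.det_nonsing_inv, hg.1, hdet]
    simp
  have htnn : 0 ≤ t := ht ▸ Complex.normSq_nonneg β
  have h0 : 0 ≤ (a + b) ^ 2 + 4 * a * b * t := by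
    nlinarith [mul_nonneg (mul_pos ha hb).le htnn, sq_nonneg (a + b)]
  set c := Real.sqrt ((a + b) ^ 2 + 4 * a * b * t) with hc
  have hc2 : c ^ 2 = (a + b) ^ 2 + 4 * a * b * t := Real.sq_sqrt h0
  have hcnn : 0 ≤ c := hc ▸ Real.sqrt_nonneg _
  refine ⟨c, ?_, ?_⟩
  · nlinarith [hc2, hcnn, mul_nonneg (mul_pos ha hb).le htnn]
  · rw [charpoly11, htAB, hdAB, ← hc2]
    push_cast
    simp only [map_neg, map_pow, map_zero]
    ring
end
end

section
/- Let C be a nonempty closed convex subset of ℝⁿ containing no affine line. Then C = Conv(Ext(C)) + lim(C): every element of C is the sum of a convex combination of extreme points of C and a vector v with C + v ⊆ C, and conversely every such sum lies in C. -/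
open Set Filter Topology FiniteDimensional

open Set Filter Topology FiniteDimensional

variable {E : Type} [NormedAddCommGroup E] [NormedSpace ℝ E]

/-- recession cone -/
def RecCone (C : Set E) : Set E := {v | ∀ w ∈ C, w + v ∈ C}

def LineFree (C : Set E) : Prop := ¬∃ x u : E, u ≠ 0 ∧ ∀ t : ℝ, x + t • u ∈ C

def GoodSet (C : Set E) : Set E :=
  {z | ∃ y ∈ convexHull ℝ (Set.extremePoints ℝ C), ∃ v ∈ RecCone C, z = y + v}

/-- if a ray from a point stays in a closed convex set, its direction is recessive -/
lemma ray_recCone {C : Set E} (hcl : IsClosed C) (hconv : Convex ℝ C)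
    {p v : E} (hp : p ∈ C) (h : ∀ t : ℝ, 0 ≤ t → p + t • v ∈ C) :
    v ∈ RecCone C := by
  intro w hw
  have hmem : ∀ n : ℕ, (1 - 1/(n+1:ℝ)) • w + (1/(n+1:ℝ)) • (p + ((n:ℝ)+1) • v) ∈ C := by
    intro n
    have hn : (0:ℝ) < 1/(n+1:ℝ) := by positivity
    have hn1 : (0:ℝ) ≤ 1 - 1/(n+1:ℝ) := by
      rw [sub_nonneg]
      exact div_le_one_of_le₀ (by linarith [Nat.cast_nonneg (α := ℝ) n]) (by positivity)
    exact hconv hw (h _ (by positivity)) hn1 hn.le (by ring)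
  have heq : ∀ n : ℕ, (1 - 1/(n+1:ℝ)) • w + (1/(n+1:ℝ)) • (p + ((n:ℝ)+1) • v)
      = (w + v) + (1/(n+1:ℝ)) • (p - w) := by
    intro n
    have hne : (n:ℝ)+1 ≠ 0 := by positivity
    rw [smul_add, smul_smul, one_div, inv_mul_cancel₀ hne, one_smul]
    module
  have htend : Tendsto (fun n : ℕ => (w + v) + (1/(n+1:ℝ)) • (p - w)) atTop (𝓝 (w + v)) := by
    have : Tendsto (fun n : ℕ => (1/(n+1:ℝ))) atTop (𝓝 0) := tendsto_one_div_add_atTop_nhds_zero_nat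
    simpa using ((this.smul_const (p - w)).const_add (w + v))
  refine hcl.mem_of_tendsto htend (Eventually.of_forall fun n => ?_)
  rw [← heq n]; exact hmem n

lemma recCone_ray {C : Set E} (hconv : Convex ℝ C) {v : E} (hv : v ∈ RecCone C)
    {w : E} (hw : w ∈ C) {t : ℝ} (ht : 0 ≤ t) : w + t • v ∈ C := by
  have hnat : ∀ n : ℕ, w + (n : ℝ) • v ∈ C := by
    intro n
    induction n with
    | zero => simpa using hw
    | succ k ih =>
      have := hv _ ih
      push_cast
      convert this using 1
      module
  obtain ⟨n, hn⟩ := exists_nat_ge t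
  rcases eq_or_lt_of_le ht with h0 | h0
  · simpa [← h0] using hw
  have hnpos : (0:ℝ) < n := lt_of_lt_of_le h0 hn
  have key : w + t • v = (1 - t/n) • w + (t/n) • (w + (n:ℝ) • v) := by
    have hne : (n:ℝ) ≠ 0 := ne_of_gt hnpos
    match_scalars <;> field_simp <;> ring
  rw [key]
  exact hconv hw (hnat n) (by rw [sub_nonneg]; exact div_le_one_of_le₀ hn hnpos.le)
    (by positivity) (by ring)

lemma recCone_smul {C : Set E} (hconv : Convex ℝ C) {v : E} (hv : v ∈ RecCone C)
    {t : ℝ} (ht : 0 ≤ t) : t • v ∈ RecCone C :=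
  fun w hw => recCone_ray hconv hv hw ht

lemma recCone_add {C : Set E} {v v' : E} (hv : v ∈ RecCone C) (hv' : v' ∈ RecCone C) :
    v + v' ∈ RecCone C := fun w hw => by
  have := hv' _ (hv _ hw); rwa [add_assoc] at this

lemma recCone_convex {C : Set E} (hconv : Convex ℝ C) : Convex ℝ (RecCone C) := by
  intro v hv v' hv' a b ha hb hab w hw
  have : a • (w + v) + b • (w + v') ∈ C := hconv (hv w hw) (hv' w hw) ha hb hab
  have heq : a • (w + v) + b • (w + v') = w + (a • v + b • v') := by
    match_scalars <;> linarith
  rwa [heq] at this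

lemma goodSet_convex {C : Set E} (hconv : Convex ℝ C) : Convex ℝ (GoodSet C) := by
  rintro z₁ ⟨y₁, hy₁, v₁, hv₁, rfl⟩ z₂ ⟨y₂, hy₂, v₂, hv₂, rfl⟩ a b ha hb hab
  refine ⟨a • y₁ + b • y₂, (convex_convexHull ℝ _) hy₁ hy₂ ha hb hab,
    a • v₁ + b • v₂, recCone_convex hconv hv₁ hv₂ ha hb hab, by module⟩

/-- transfer lemma: if the statement holds for the slice of `D` inside the affine
subspace `p + W` (which contains `D`), then it holds for `D`. -/
lemma transfer (W : Submodule ℝ E) (D : Set E)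
    (hcl : IsClosed D) (hconv : Convex ℝ D) (hne : D.Nonempty) (hlf : LineFree D)
    (p : E) (hsub : ∀ x ∈ D, x - p ∈ W)
    (ih : ∀ C' : Set W, IsClosed C' → Convex ℝ C' → C'.Nonempty → LineFree C' →
      ∀ z ∈ C', z ∈ GoodSet C') :
    ∀ z ∈ D, z ∈ GoodSet D := by
  set g : W →ᵃ[ℝ] E :=
    (AffineEquiv.constVAdd ℝ E p).toAffineMap.comp W.subtype.toAffineMap with hg
  have hgdef : ∀ w : W, g w = p + (w : E) := fun w => rfl
  set D' : Set W := {w : W | p + (w : E) ∈ D} with hD'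
  -- membership correspondence
  have hmem : ∀ x (hx : x ∈ D), (⟨x - p, hsub x hx⟩ : W) ∈ D' := by
    intro x hx
    simp only [hD', mem_setOf_eq]
    simpa using hx
  -- D' is closed
  have hcl' : IsClosed D' := by
    have : Continuous fun w : W => p + (w : E) := continuous_const.add continuous_subtype_val
    exact hcl.preimage this
  -- D' convex
  have hconv' : Convex ℝ D' := by
    intro x hx y hy a b ha hb hab
    simp only [hD', mem_setOf_eq, Submodule.coe_add, SetLike.val_smul] at *
    have := hconv hx hy ha hb hab
    convert this using 1
    match_scalars <;> linarith
  -- D' nonempty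
  obtain ⟨x₀, hx₀⟩ := hne
  have hne' : D'.Nonempty := ⟨_, hmem x₀ hx₀⟩
  -- D' line-free
  have hlf' : LineFree D' := by
    rintro ⟨x, u, hu, hray⟩
    refine hlf ⟨p + (x : E), (u : E), fun h => hu (Subtype.ext (by simpa using h)), fun t => ?_⟩
    have := hray t
    simp only [hD', mem_setOf_eq] at this
    convert this using 1
    push_cast
    module
  -- extreme point transfer
  have hext : ∀ e ∈ Set.extremePoints ℝ D', p + (e : E) ∈ Set.extremePoints ℝ D := by
    rintro e ⟨heD, hextr⟩
    refine ⟨heD, ?_⟩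
    intro x₁ hx₁ x₂ hx₂ hseg
    obtain ⟨a, b, ha, hb, hab, habe⟩ := hseg
    set x₁' : W := ⟨x₁ - p, hsub _ hx₁⟩
    set x₂' : W := ⟨x₂ - p, hsub _ hx₂⟩
    have hseg' : e ∈ openSegment ℝ x₁' x₂' := by
      refine ⟨a, b, ha, hb, hab, ?_⟩
      apply Subtype.ext
      push_cast
      have : a • x₁ + b • x₂ - p = (e : E) := by rw [habe]; abel
      rw [← this]
      match_scalars <;> linarith
    have h1 := hextr (hmem _ hx₁) (hmem _ hx₂) hseg'
    have := congrArg (Subtype.val) h1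
    simp only at this
    rw [← this]; abel
  -- main transfer
  intro z hz
  obtain ⟨y, hy, v, hv, hzv⟩ := ih D' hcl' hconv' hne' hlf' _ (hmem z hz)
  refine ⟨p + (y : E), ?_, (v : E), ?_, ?_⟩
  · have : g y ∈ g '' (convexHull ℝ (Set.extremePoints ℝ D')) := mem_image_of_mem _ hy
    rw [AffineMap.image_convexHull] at this
    refine convexHull_mono ?_ this
    rintro _ ⟨e, he, rfl⟩
    exact hext e he
  · intro w hw
    have hw' := hmem w hw
    have h3 : p + ((w - p) + (v : E)) ∈ D := hv _ hw'
    have h4 : w + (v : E) = p + ((w - p) + (v : E)) := by abel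
    rw [h4]; exact h3
  · have := congrArg (Subtype.val) hzv
    simp only [Submodule.coe_add] at this
    have hz' : z - p = (y : E) + (v : E) := this
    rw [show z = p + (z - p) by abel, hz']
    abel


lemma ray_of_nat {C : Set E} (hconv : Convex ℝ C) {q v : E} (hq : q ∈ C)
    (h : ∀ n : ℕ, q + (n : ℝ) • v ∈ C) {t : ℝ} (ht : 0 ≤ t) : q + t • v ∈ C := by
  obtain ⟨n, hn⟩ := exists_nat_ge t
  rcases eq_or_lt_of_le ht with h0 | h0
  · simpa [← h0] using hq
  have hnpos : (0:ℝ) < n := lt_of_lt_of_le h0 hn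
  have hne : (n:ℝ) ≠ 0 := ne_of_gt hnpos
  have key : q + t • v = (1 - t/n) • q + (t/n) • (q + (n:ℝ) • v) := by
    match_scalars <;> field_simp <;> ring
  rw [key]
  exact hconv hq (h n) (by rw [sub_nonneg]; exact div_le_one_of_le₀ hn hnpos.le)
    (by positivity) (by ring)

lemma recCone_mono {C F : Set E} (hcl : IsClosed C) (hconv : Convex ℝ C)
    (hFC : F ⊆ C) : RecCone F ∩ {v | F.Nonempty} ⊆ RecCone C := by
  rintro v ⟨hv, hFne⟩
  obtain ⟨q, hq⟩ := hFne
  have hnat : ∀ n : ℕ, q + (n : ℝ) • v ∈ F := by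
    intro n
    induction n with
    | zero => simpa using hq
    | succ k ih =>
      have := hv _ ih
      push_cast
      convert this using 1
      module
  exact ray_recCone hcl hconv (hFC hq)
    (fun t ht => ray_of_nat hconv (hFC hq) (fun n => hFC (hnat n)) ht)

lemma face_extremePoints {C : Set E} {f : E →L[ℝ] ℝ} {c : ℝ} (hle : ∀ w ∈ C, f w ≤ c) :
    Set.extremePoints ℝ {w ∈ C | f w = c} ⊆ Set.extremePoints ℝ C := by
  rintro e ⟨⟨heC, hec⟩, hextr⟩
  refine ⟨heC, ?_⟩
  intro x₁ hx₁ x₂ hx₂ hseg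
  obtain ⟨a, b, ha, hb, hab, habe⟩ := hseg
  have hfe : a * f x₁ + b * f x₂ = c := by
    rw [← hec, ← habe]; simp [map_add, map_smul]
  have hle1 := hle _ hx₁
  have hle2 := hle _ hx₂
  have h1 : f x₁ = c := by
    by_contra h
    have hlt : f x₁ < c := lt_of_le_of_ne hle1 h
    have hc : a*c + b*c = c := by rw [← add_mul, hab, one_mul]
    nlinarith [mul_lt_mul_of_pos_left hlt ha, mul_le_mul_of_nonneg_left hle2 hb.le]
  have h2 : f x₂ = c := by
    by_contra h
    have hlt : f x₂ < c := lt_of_le_of_ne hle2 h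
    have hc : a*c + b*c = c := by rw [← add_mul, hab, one_mul]
    nlinarith [mul_lt_mul_of_pos_left hlt hb, mul_le_mul_of_nonneg_left hle1 ha.le]
  exact hextr ⟨hx₁, h1⟩ ⟨hx₂, h2⟩ ⟨a, b, ha, hb, hab, habe⟩

lemma not_interior_of_escape {C : Set E} {p w : E}
    (h : ∀ ε : ℝ, 0 < ε → p + ε • w ∉ C) : p ∉ interior C := by
  intro hmem
  have hC : C ∈ 𝓝 p := mem_interior_iff_mem_nhds.1 hmem
  have htend : Filter.Tendsto (fun n : ℕ => p + (1/(n+1:ℝ)) • w) atTop (𝓝 p) := by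
    have h1 : Filter.Tendsto (fun n : ℕ => (1/(n+1:ℝ))) atTop (𝓝 0) :=
      tendsto_one_div_add_atTop_nhds_zero_nat
    simpa using ((h1.smul_const w).const_add p)
  obtain ⟨n, hn⟩ := (htend.eventually_mem hC).exists
  exact h (1/(n+1:ℝ)) (by positivity) hn

lemma extreme_goodSet {C : Set E} {z : E} (hz : z ∈ Set.extremePoints ℝ C) :
    z ∈ GoodSet C :=
  ⟨z, subset_convexHull ℝ _ hz, 0, fun w hw => by simpa using hw, (add_zero z).symm⟩

theorem main (d : ℕ) :
    ∀ (E : Type) [NormedAddCommGroup E] [NormedSpace ℝ E] [FiniteDimensional ℝ E],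
      Module.finrank ℝ E ≤ d → ∀ C : Set E, IsClosed C → Convex ℝ C → C.Nonempty →
      LineFree C → ∀ z ∈ C, z ∈ GoodSet C := by
  induction d with
  | zero =>
    intro E _ _ _ hrank C hcl hconv hne hlf z hz
    have : Module.finrank ℝ E = 0 := Nat.le_zero.1 hrank
    have hsub : Subsingleton E := Module.finrank_zero_iff.1 this
    exact extreme_goodSet ⟨hz, fun x₁ _ x₂ _ _ => Subsingleton.elim _ _⟩
  | succ d IH =>
    intro E _ _ _ hrank C hcl hconv hne hlf z hz
    by_cases hint : (interior C).Nonempty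
    · -- full-dimensional case
      -- boundary points are good
      have claim : ∀ p ∈ C, p ∉ interior C → p ∈ GoodSet C := by
        intro p hp hpint
        obtain ⟨f, c, hfc1, hfc2⟩ := geometric_hahn_banach_open hconv.interior isOpen_interior
          (convex_singleton p) (Set.disjoint_singleton_right.2 hpint)
        have hcp : c ≤ f p := hfc2 p rfl
        obtain ⟨w₀, hw₀⟩ := hint
        have hcle : ∀ w ∈ C, f w ≤ c := by
          intro w hw
          have seq : ∀ n : ℕ, f ((1 - 1/(n+1:ℝ)) • w + (1/(n+1:ℝ)) • w₀) < c := by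
            intro n
            apply hfc1
            refine hconv.combo_closure_interior_mem_interior (subset_closure hw) hw₀ ?_ ?_ (by ring)
            · rw [sub_nonneg]
              exact div_le_one_of_le₀ (by linarith [Nat.cast_nonneg (α := ℝ) n]) (by positivity)
            · positivity
          have h1 : Filter.Tendsto (fun n : ℕ => (1/(n+1:ℝ))) atTop (𝓝 0) :=
            tendsto_one_div_add_atTop_nhds_zero_nat
          have htend0 : Filter.Tendsto
              (fun n : ℕ => (1 - 1/(n+1:ℝ)) • w + (1/(n+1:ℝ)) • w₀) atTop (𝓝 w) := by
            have := ((h1.const_sub 1).smul_const w).add (h1.smul_const w₀)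
            simpa using this
          have htend : Filter.Tendsto
              (fun n : ℕ => f ((1 - 1/(n+1:ℝ)) • w + (1/(n+1:ℝ)) • w₀)) atTop (𝓝 (f w)) :=
            (f.continuous.tendsto w).comp htend0
          exact le_of_tendsto htend (Filter.Eventually.of_forall fun n => (seq n).le)
        have hfp : f p = c := le_antisymm (hcle p hp) hcp
        set F : Set E := {w ∈ C | f w = c} with hF
        have hpF : p ∈ F := ⟨hp, hfp⟩
        -- f is nonzero
        have hfw₀ : f w₀ < c := hfc1 _ hw₀
        have hfd : f p - f w₀ ≠ 0 := by
          intro h; rw [sub_eq_zero] at h; rw [hfp] at h; linarith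
        have hrange : LinearMap.range (f : E →ₗ[ℝ] ℝ) = ⊤ := by
          rw [LinearMap.range_eq_top]
          intro r
          refine ⟨(r / (f p - f w₀)) • (p - w₀), ?_⟩
          simp only [ContinuousLinearMap.coe_coe, map_smul, map_sub, smul_eq_mul]
          exact div_mul_cancel₀ r hfd
        have hrk : Module.finrank ℝ (LinearMap.ker (f : E →ₗ[ℝ] ℝ)) ≤ d := by
          have h1 := LinearMap.finrank_range_add_finrank_ker (f : E →ₗ[ℝ] ℝ)
          rw [hrange, finrank_top, Module.finrank_self] at h1
          omega
        -- F is closed, convex, nonempty, line-free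
        have hFcl : IsClosed F := hcl.inter (isClosed_eq f.continuous continuous_const)
        have hFC : F ⊆ C := fun x hx => hx.1
        have hFconv : Convex ℝ F := by
          intro x hx y hy a b ha hb hab
          refine ⟨hconv hx.1 hy.1 ha hb hab, ?_⟩
          simp only [map_add, map_smul, smul_eq_mul, hx.2, hy.2]
          linear_combination c * hab
        have hFlf : LineFree F := by
          rintro ⟨x, u, hu, hray⟩
          exact hlf ⟨x, u, hu, fun t => (hray t).1⟩
        have hsubW : ∀ x ∈ F, x - p ∈ LinearMap.ker (f : E →ₗ[ℝ] ℝ) := by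
          intro x hx
          simp only [LinearMap.mem_ker, ContinuousLinearMap.coe_coe, map_sub, hx.2, hfp,
            sub_self]
        have hgoodF : ∀ x ∈ F, x ∈ GoodSet F := by
          apply transfer _ F hFcl hFconv ⟨p, hpF⟩ hFlf p hsubW
          intro C' h1 h2 h3 h4
          exact IH _ hrk C' h1 h2 h3 h4
        obtain ⟨y, hy, v, hv, hpe⟩ := hgoodF p hpF
        refine ⟨y, convexHull_mono (face_extremePoints hcle) hy, v, ?_, hpe⟩
        exact recCone_mono hcl hconv hFC ⟨hv, ⟨p, hpF⟩⟩
      -- now the line argument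
      by_cases hsing : ∀ y ∈ C, y = z
      · exact extreme_goodSet ⟨hz, fun x₁ h1 x₂ h2 hseg => by
          rw [hsing _ h1]⟩
      push_neg at hsing
      obtain ⟨y₀, hy₀, hy₀z⟩ := hsing
      have hkey : ∀ u : E, u ≠ 0 → BddBelow {t : ℝ | z + t • u ∈ C} → z ∈ GoodSet C := by
        intro u hu hbb
        set S : Set ℝ := {t : ℝ | z + t • u ∈ C} with hS
        have h0S : (0:ℝ) ∈ S := by simp [hS, hz]
        have hScl : IsClosed S :=
          hcl.preimage (continuous_const.add (continuous_id.smul continuous_const))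
        have hSconv : Convex ℝ S := by
          intro t₁ h₁ t₂ h₂ a b ha hb hab
          have := hconv h₁ h₂ ha hb hab
          simp only [hS, Set.mem_setOf_eq, smul_eq_mul]
          convert this using 1
          match_scalars <;> ring_nf <;> try linarith
        set a : ℝ := sInf S with ha
        have haS : a ∈ S := hScl.csInf_mem ⟨0, h0S⟩ hbb
        have ha0 : a ≤ 0 := csInf_le hbb h0S
        set p : E := z + a • u with hp
        have hpC : p ∈ C := haS
        have hpb : ∀ ε : ℝ, 0 < ε → p + ε • (-u) ∉ C := by
          intro ε hε hmem
          have hin : a - ε ∈ S := by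
            show z + (a - ε) • u ∈ C
            convert hmem using 1
            rw [hp]; module
          linarith [csInf_le hbb hin]
        have hpint : p ∉ interior C := not_interior_of_escape hpb
        have good_p : p ∈ GoodSet C := claim p hpC hpint
        by_cases hba : BddAbove S
        · set b : ℝ := sSup S with hb
          have hbS : b ∈ S := hScl.csSup_mem ⟨0, h0S⟩ hba
          have hb0 : 0 ≤ b := le_csSup hba h0S
          set q : E := z + b • u with hq
          have hqC : q ∈ C := hbS
          have hqb : ∀ ε : ℝ, 0 < ε → q + ε • u ∉ C := by
            intro ε hε hmem
            have hin : b + ε ∈ S := by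
              show z + (b + ε) • u ∈ C
              convert hmem using 1
              rw [hq]; module
            linarith [le_csSup hba hin]
          have good_q : q ∈ GoodSet C := claim q hqC (not_interior_of_escape hqb)
          rcases eq_or_lt_of_le ha0 with ha0' | ha0'
          · have : p = z := by rw [hp, ha0']; simp
            rwa [← this]
          rcases eq_or_lt_of_le hb0 with hb0' | hb0'
          · have : q = z := by rw [hq, ← hb0']; simp
            rwa [← this]
          have hba' : (0:ℝ) < b - a := by linarith
          have hα : (0:ℝ) ≤ b/(b-a) := div_nonneg (by linarith) (by linarith)
          have hβ : (0:ℝ) ≤ -a/(b-a) := div_nonneg (by linarith) (by linarith)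
          have hαβ : b/(b-a) + -a/(b-a) = 1 := by
            rw [← add_div, show b + -a = b - a by ring, div_self (by linarith)]
          have hcomb := goodSet_convex hconv good_p good_q hα hβ hαβ
          have hzeq : (b/(b-a)) • p + (-a/(b-a)) • q = z := by
            rw [hp, hq]
            match_scalars <;> (field_simp; try ring)
          rwa [hzeq] at hcomb
        · have hSub : ∀ t : ℝ, 0 ≤ t → t ∈ S := by
            intro t ht
            obtain ⟨s', hs', hts'⟩ := not_bddAbove_iff.1 hba t
            exact hSconv.ordConnected.out h0S hs' ⟨ht, hts'.le⟩
          have hu_rec : u ∈ RecCone C := ray_recCone hcl hconv hz (fun t ht => hSub t ht)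
          obtain ⟨y, hy, v, hv, hpe⟩ := good_p
          refine ⟨y, hy, v + (-a) • u,
            recCone_add hv (recCone_smul hconv hu_rec (by linarith)), ?_⟩
          have h1 : z = p + (-a) • u := by rw [hp]; module
          rw [h1, hpe]; module
      set u : E := y₀ - z with hu'
      have hu : u ≠ 0 := sub_ne_zero.2 hy₀z
      have hSconv : Convex ℝ {t : ℝ | z + t • u ∈ C} := by
        intro t₁ h₁ t₂ h₂ a b ha hb hab
        have := hconv h₁ h₂ ha hb hab
        simp only [Set.mem_setOf_eq, smul_eq_mul]
        convert this using 1
        match_scalars <;> ring_nf <;> try linarith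
      have hBB : BddBelow {t : ℝ | z + t • u ∈ C} ∨ BddAbove {t : ℝ | z + t • u ∈ C} := by
        by_contra h
        push_neg at h
        refine hlf ⟨z, u, hu, fun t => ?_⟩
        obtain ⟨s, hs, hst⟩ := not_bddBelow_iff.1 h.1 t
        obtain ⟨s', hs', hts'⟩ := not_bddAbove_iff.1 h.2 t
        exact hSconv.ordConnected.out hs hs' ⟨hst.le, hts'.le⟩
      rcases hBB with h | h
      · exact hkey u hu h
      · refine hkey (-u) (neg_ne_zero.2 hu) ?_
        obtain ⟨M, hM⟩ := h
        refine ⟨-M, fun t ht => ?_⟩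
        have hmem : -t ∈ {t : ℝ | z + t • u ∈ C} := by
          have heq : z + (-t) • u = z + t • (-u) := by module
          show z + (-t) • u ∈ C
          rw [heq]
          exact ht
        have := hM hmem
        linarith [this]
    · -- degenerate case : C has empty interior
      have hspan : affineSpan ℝ C ≠ ⊤ := fun h =>
        hint (hconv.interior_nonempty_iff_affineSpan_eq_top.2 h)
      obtain ⟨p, hp⟩ := id hne
      set W : Submodule ℝ E := (affineSpan ℝ C).direction with hW
      have hsub : ∀ x ∈ C, x - p ∈ W :=
        fun x hx => AffineSubspace.vsub_mem_direction (subset_affineSpan ℝ C hx)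
          (subset_affineSpan ℝ C hp)
      have hWne : W ≠ ⊤ := by
        intro h
        exact hspan ((AffineSubspace.direction_eq_top_iff_of_nonempty
          ((affineSpan_nonempty ℝ).2 hne)).1 h)
      have hrk : Module.finrank ℝ W ≤ d := by
        have := Submodule.finrank_lt hWne
        omega
      exact transfer W C hcl hconv hne hlf p hsub
        (fun C' h1 h2 h3 h4 => IH (↥W) hrk C' h1 h2 h3 h4) z hz



/-- a nonempty closed convex subset `C ⊆ ℝⁿ` containing no affine line
satisfies `C = Conv(Ext(C)) + lim(C)`, where `Ext(C)` is its set of extreme points and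
`lim(C) = {v : C + v ⊆ C}` is its recession cone. -/
theorem closed_convex_eq_convexHull_extremePoints_add_recession
    (n : ℕ) (C : Set (Fin n → ℝ))
    (hne : C.Nonempty) (hclosed : IsClosed C) (hconv : Convex ℝ C)
    (hline : ¬∃ (x u : Fin n → ℝ), u ≠ 0 ∧ ∀ t : ℝ, x + t • u ∈ C) :
    C = { z | ∃ y ∈ convexHull ℝ (Set.extremePoints ℝ C),
      ∃ v : Fin n → ℝ, (∀ w ∈ C, w + v ∈ C) ∧ z = y + v } := by
  apply Set.Subset.antisymm
  · intro z hz
    obtain ⟨y, hy, v, hv, hzv⟩ := main (Module.finrank ℝ (Fin n → ℝ)) (Fin n → ℝ)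
      le_rfl C hclosed hconv hne hline z hz
    exact ⟨y, hy, v, hv, hzv⟩
  · rintro z ⟨y, hy, v, hv, rfl⟩
    have hyC : y ∈ C := convexHull_min (extremePoints_subset) hconv hy
    exact hv y hyC
end
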